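/- Let R be a unique factorization domain whose fraction field L has characteristic different from two, let a₁, a₂ ∈ R, and suppose fᵢ = xᵢ² − aᵢ is irreducible in L[xᵢ] for i = 1, 2, and that T = R[x₁,x₂]/(f₁, f₂) is an integral domain. Then T is a free R-module of rank four, and consequently for any surjective R-algebra homomorphism T → S onto a ring S containing R with the composite R → T → S equal to the inclusion, the extension R ⊆ S is isomorphic to R ⊆ T and splits. -/

import Mathlib

open MvPolynomial

noncomputable section

/-- `T = R[x₁,x₂]/(x₁² − a₁, x₂² − a₂)`. -/
abbrev radQuadQuot (R : Type) [CommRing R] (a₁ a₂ : R) : Type :=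
  MvPolynomial (Fin 2) R ⧸
    (Ideal.span {(X 0 : MvPolynomial (Fin 2) R) ^ 2 - C a₁,
      (X 1 : MvPolynomial (Fin 2) R) ^ 2 - C a₂} : Ideal (MvPolynomial (Fin 2) R))

namespace Stmt16Aux

variable (R : Type) [CommRing R] (a₁ a₂ : R)

/-- `A = R[x]/(x² - a₁)`. -/
abbrev A : Type := AdjoinRoot ((Polynomial.X : Polynomial R) ^ 2 - Polynomial.C a₁)

/-- `B = A[y]/(y² - a₂)`. -/
abbrev B : Type :=
  AdjoinRoot ((Polynomial.X : Polynomial (A R a₁)) ^ 2 -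
    Polynomial.C (algebraMap R (A R a₁) a₂))

lemma g₁_monic : ((Polynomial.X : Polynomial R) ^ 2 - Polynomial.C a₁).Monic :=
  Polynomial.monic_X_pow_sub_C a₁ two_ne_zero

lemma g₂_monic :
    ((Polynomial.X : Polynomial (A R a₁)) ^ 2 -
      Polynomial.C (algebraMap R (A R a₁) a₂)).Monic :=
  Polynomial.monic_X_pow_sub_C _ two_ne_zero

lemma root₁_sq :
    (AdjoinRoot.root ((Polynomial.X : Polynomial R) ^ 2 - Polynomial.C a₁)) ^ 2 =
      algebraMap R (A R a₁) a₁ := by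
  have h := AdjoinRoot.eval₂_root ((Polynomial.X : Polynomial R) ^ 2 - Polynomial.C a₁)
  rw [Polynomial.eval₂_sub, Polynomial.eval₂_pow, Polynomial.eval₂_X, Polynomial.eval₂_C,
    sub_eq_zero] at h
  rw [h, AdjoinRoot.algebraMap_eq]

lemma root₂_sq :
    (AdjoinRoot.root ((Polynomial.X : Polynomial (A R a₁)) ^ 2 -
        Polynomial.C (algebraMap R (A R a₁) a₂))) ^ 2 =
      algebraMap R (B R a₁ a₂) a₂ := by
  have h := AdjoinRoot.eval₂_root ((Polynomial.X : Polynomial (A R a₁)) ^ 2 -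
    Polynomial.C (algebraMap R (A R a₁) a₂))
  rw [Polynomial.eval₂_sub, Polynomial.eval₂_pow, Polynomial.eval₂_X, Polynomial.eval₂_C,
    sub_eq_zero] at h
  rw [h, ← AdjoinRoot.algebraMap_eq, ← IsScalarTower.algebraMap_apply]

/-- images of the two variables in `B` -/
def v : Fin 2 → B R a₁ a₂ :=
  ![algebraMap (A R a₁) (B R a₁ a₂)
      (AdjoinRoot.root ((Polynomial.X : Polynomial R) ^ 2 - Polynomial.C a₁)),
    AdjoinRoot.root _]

/-- The forward map `T →ₐ[R] B`. -/
def fwd : radQuadQuot R a₁ a₂ →ₐ[R] B R a₁ a₂ :=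
  Ideal.Quotient.liftₐ _ (MvPolynomial.aeval (v R a₁ a₂)) (by
    intro p hp
    have hle : Ideal.span {(X 0 : MvPolynomial (Fin 2) R) ^ 2 - C a₁,
        (X 1 : MvPolynomial (Fin 2) R) ^ 2 - C a₂} ≤
        RingHom.ker (MvPolynomial.aeval (v R a₁ a₂) :
          MvPolynomial (Fin 2) R →ₐ[R] B R a₁ a₂).toRingHom := by
      rw [Ideal.span_le]
      rintro q hq
      simp only [Set.mem_insert_iff, Set.mem_singleton_iff] at hq
      rcases hq with rfl | rfl <;>
        simp only [SetLike.mem_coe, RingHom.mem_ker, AlgHom.toRingHom_eq_coe,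
          RingHom.coe_coe, map_sub, map_pow, aeval_X, aeval_C, v,
          Matrix.cons_val_zero, Matrix.cons_val_one, Matrix.head_cons]
      · rw [← map_pow, root₁_sq, ← IsScalarTower.algebraMap_apply, sub_self]
      · rw [root₂_sq, sub_self]
    exact hle hp)

/-- class of `x₁` in `T` -/
def t₀ : radQuadQuot R a₁ a₂ := Ideal.Quotient.mk _ (X 0)

/-- class of `x₂` in `T` -/
def t₁ : radQuadQuot R a₁ a₂ := Ideal.Quotient.mk _ (X 1)

lemma t₀_sq : (t₀ R a₁ a₂) ^ 2 = algebraMap R (radQuadQuot R a₁ a₂) a₁ := by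
  rw [← sub_eq_zero]
  have : (t₀ R a₁ a₂) ^ 2 - algebraMap R (radQuadQuot R a₁ a₂) a₁ =
      Ideal.Quotient.mk _ ((X 0 : MvPolynomial (Fin 2) R) ^ 2 - C a₁) := by
    rw [map_sub, map_pow]; rfl
  rw [this, Ideal.Quotient.eq_zero_iff_mem]
  exact Ideal.subset_span (Set.mem_insert _ _)

lemma t₁_sq : (t₁ R a₁ a₂) ^ 2 = algebraMap R (radQuadQuot R a₁ a₂) a₂ := by
  rw [← sub_eq_zero]
  have : (t₁ R a₁ a₂) ^ 2 - algebraMap R (radQuadQuot R a₁ a₂) a₂ =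
      Ideal.Quotient.mk _ ((X 1 : MvPolynomial (Fin 2) R) ^ 2 - C a₂) := by
    rw [map_sub, map_pow]; rfl
  rw [this, Ideal.Quotient.eq_zero_iff_mem]
  exact Ideal.subset_span (Set.mem_insert_iff.mpr (Or.inr rfl))

lemma aeval_t₀ :
    Polynomial.aeval (t₀ R a₁ a₂)
      ((Polynomial.X : Polynomial R) ^ 2 - Polynomial.C a₁) = 0 := by
  rw [Polynomial.aeval_def, Polynomial.eval₂_sub, Polynomial.eval₂_pow, Polynomial.eval₂_X,
    Polynomial.eval₂_C, t₀_sq, sub_self]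

/-- Lift of `A → T`. -/
def gA : A R a₁ →ₐ[R] radQuadQuot R a₁ a₂ :=
  AdjoinRoot.liftAlgHom _ (Algebra.ofId R _) (t₀ R a₁ a₂) (aeval_t₀ R a₁ a₂)

lemma gA_root :
    gA R a₁ a₂ (AdjoinRoot.root ((Polynomial.X : Polynomial R) ^ 2 - Polynomial.C a₁)) =
      t₀ R a₁ a₂ := by
  exact AdjoinRoot.liftAlgHom_root _ _ _ _

lemma eval₂_gA :
    Polynomial.eval₂ (gA R a₁ a₂ : A R a₁ →+* radQuadQuot R a₁ a₂) (t₁ R a₁ a₂)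
      ((Polynomial.X : Polynomial (A R a₁)) ^ 2 - Polynomial.C (algebraMap R (A R a₁) a₂)) =
      0 := by
  rw [Polynomial.eval₂_sub, Polynomial.eval₂_pow, Polynomial.eval₂_X, Polynomial.eval₂_C,
    t₁_sq]
  rw [show (gA R a₁ a₂ : A R a₁ →+* radQuadQuot R a₁ a₂) (algebraMap R (A R a₁) a₂) =
    algebraMap R (radQuadQuot R a₁ a₂) a₂ from (gA R a₁ a₂).commutes a₂, sub_self]

/-- The backward map `B →ₐ[R] T`. -/
def bwd : B R a₁ a₂ →ₐ[R] radQuadQuot R a₁ a₂ :=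
  { AdjoinRoot.lift (gA R a₁ a₂ : A R a₁ →+* radQuadQuot R a₁ a₂) (t₁ R a₁ a₂)
      (eval₂_gA R a₁ a₂) with
    commutes' := fun r => by
      show AdjoinRoot.lift _ _ (eval₂_gA R a₁ a₂) (algebraMap R (B R a₁ a₂) r) = _
      have h1 : algebraMap R (B R a₁ a₂) r =
          AdjoinRoot.of _ (algebraMap R (A R a₁) r) :=
        IsScalarTower.algebraMap_apply R (A R a₁) (B R a₁ a₂) r
      rw [h1, AdjoinRoot.lift_of]
      exact (gA R a₁ a₂).commutes r }

lemma bwd_of (a : A R a₁) :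
    bwd R a₁ a₂ (algebraMap (A R a₁) (B R a₁ a₂) a) = gA R a₁ a₂ a := by
  show AdjoinRoot.lift _ _ (eval₂_gA R a₁ a₂) (AdjoinRoot.of _ a) = _
  rw [AdjoinRoot.lift_of]
  rfl

lemma bwd_root : bwd R a₁ a₂ (AdjoinRoot.root _) = t₁ R a₁ a₂ := by
  show AdjoinRoot.lift _ _ (eval₂_gA R a₁ a₂) (AdjoinRoot.root _) = _
  exact AdjoinRoot.lift_root _

lemma fwd_t₀ : fwd R a₁ a₂ (t₀ R a₁ a₂) = v R a₁ a₂ 0 := by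
  show fwd R a₁ a₂ (Ideal.Quotient.mk _ (X 0)) = _
  rw [fwd]
  exact aeval_X _ 0

lemma fwd_t₁ : fwd R a₁ a₂ (t₁ R a₁ a₂) = v R a₁ a₂ 1 := by
  show fwd R a₁ a₂ (Ideal.Quotient.mk _ (X 1)) = _
  rw [fwd]
  exact aeval_X _ 1

lemma bwd_comp_fwd :
    (bwd R a₁ a₂).comp (fwd R a₁ a₂) = AlgHom.id R (radQuadQuot R a₁ a₂) := by
  apply Ideal.Quotient.algHom_ext
  apply MvPolynomial.algHom_ext
  intro i
  fin_cases i <;>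
    simp only [AlgHom.comp_apply, Ideal.Quotient.mkₐ_eq_mk, AlgHom.id_apply]
  · show bwd R a₁ a₂ (fwd R a₁ a₂ (t₀ R a₁ a₂)) = t₀ R a₁ a₂
    rw [fwd_t₀]
    show bwd R a₁ a₂ (algebraMap (A R a₁) (B R a₁ a₂) (AdjoinRoot.root _)) = _
    rw [bwd_of, gA_root]
  · show bwd R a₁ a₂ (fwd R a₁ a₂ (t₁ R a₁ a₂)) = t₁ R a₁ a₂
    rw [fwd_t₁]
    exact bwd_root R a₁ a₂

lemma fwd_comp_bwd :
    (fwd R a₁ a₂).comp (bwd R a₁ a₂) = AlgHom.id R (B R a₁ a₂) := by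
  have hA : ((fwd R a₁ a₂).comp (bwd R a₁ a₂)).comp
      (IsScalarTower.toAlgHom R (A R a₁) (B R a₁ a₂)) =
      IsScalarTower.toAlgHom R (A R a₁) (B R a₁ a₂) := by
    apply AdjoinRoot.algHom_ext
    simp only [AlgHom.comp_apply, IsScalarTower.coe_toAlgHom']
    rw [bwd_of, gA_root, fwd_t₀]
    rfl
  -- upgrade to an `A`-algebra hom
  let h' : B R a₁ a₂ →ₐ[A R a₁] B R a₁ a₂ :=
    { ((fwd R a₁ a₂).comp (bwd R a₁ a₂)).toRingHom with
      commutes' := fun a => AlgHom.congr_fun hA a }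
  have : h' = AlgHom.id (A R a₁) (B R a₁ a₂) := by
    apply AdjoinRoot.algHom_ext
    show fwd R a₁ a₂ (bwd R a₁ a₂ (AdjoinRoot.root _)) = AdjoinRoot.root _
    rw [bwd_root, fwd_t₁]
    rfl
  refine AlgHom.ext fun b => ?_
  exact AlgHom.congr_fun this b

/-- `T ≃ₐ[R] B`. -/
def equivB : radQuadQuot R a₁ a₂ ≃ₐ[R] B R a₁ a₂ :=
  AlgEquiv.ofAlgHom (fwd R a₁ a₂) (bwd R a₁ a₂) (fwd_comp_bwd R a₁ a₂)
    (bwd_comp_fwd R a₁ a₂)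

/-- Power basis of `A` over `R`. -/
def pbA : PowerBasis R (A R a₁) := AdjoinRoot.powerBasis' (g₁_monic R a₁)

/-- Power basis of `B` over `A`. -/
def pbB : PowerBasis (A R a₁) (B R a₁ a₂) := AdjoinRoot.powerBasis' (g₂_monic R a₁ a₂)

/-- A basis of `T` over `R`. -/
def basisT : Module.Basis (Fin (pbA R a₁).dim × Fin (pbB R a₁ a₂).dim) R (radQuadQuot R a₁ a₂) :=
  (((pbA R a₁).basis.smulTower (pbB R a₁ a₂).basis).map
    (equivB R a₁ a₂).symm.toLinearEquiv)

lemma dimA [Nontrivial R] : (pbA R a₁).dim = 2 :=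
  Polynomial.natDegree_X_pow_sub_C

lemma dimB [Nontrivial (A R a₁)] : (pbB R a₁ a₂).dim = 2 :=
  Polynomial.natDegree_X_pow_sub_C

lemma basisT_zero [Nontrivial (A R a₁)] [Nontrivial (B R a₁ a₂)] :
    basisT R a₁ a₂ (⟨0, (pbA R a₁).dim_pos⟩, ⟨0, (pbB R a₁ a₂).dim_pos⟩) = 1 := by
  rw [basisT, Module.Basis.map_apply, Module.Basis.smulTower_apply, PowerBasis.basis_eq_pow,
    PowerBasis.basis_eq_pow, pow_zero, pow_zero, one_smul]
  exact map_one (equivB R a₁ a₂).symm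

end Stmt16Aux

/-- Let `R` be a UFD whose fraction field `L` has characteristic `≠ 2`, let
`a₁, a₂ ∈ R` with `fᵢ = xᵢ² − aᵢ` irreducible in `L[xᵢ]`, and suppose
`T = R[x₁,x₂]/(f₁, f₂)` is an integral domain.  Then `T` is a free `R`-module of
rank four, and for any surjective `R`-algebra homomorphism `T → S` onto a ring `S`
containing `R` (with composite `R → T → S` the inclusion), the extension `R ⊆ S` is
isomorphic to `R ⊆ T` and splits. -/
theorem stmt16 (R L : Type) [CommRing R] [IsDomain R] [UniqueFactorizationMonoid R]
    [Field L] [Algebra R L] [IsFractionRing R L] (hchar : ringChar L ≠ 2)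
    (a₁ a₂ : R)
    (h₁ : Irreducible (Polynomial.X ^ 2 - Polynomial.C (algebraMap R L a₁) :
      Polynomial L))
    (h₂ : Irreducible (Polynomial.X ^ 2 - Polynomial.C (algebraMap R L a₂) :
      Polynomial L))
    (hT : IsDomain (radQuadQuot R a₁ a₂)) :
    Module.Free R (radQuadQuot R a₁ a₂) ∧
    Module.finrank R (radQuadQuot R a₁ a₂) = 4 ∧
    ∀ (S : Type) [CommRing S] [Algebra R S],
      Function.Injective (algebraMap R S) →
      ∀ φ : radQuadQuot R a₁ a₂ →ₐ[R] S, Function.Surjective φ →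
        Function.Bijective φ ∧ ∃ ρ : S →ₗ[R] R, ρ 1 = 1 := by
  classical
  haveI := hT
  haveI hA : Nontrivial (Stmt16Aux.A R a₁) := by
    refine AdjoinRoot.nontrivial _ ?_
    rw [Polynomial.degree_X_pow_sub_C (by norm_num) a₁]
    norm_num
  haveI hB : Nontrivial (Stmt16Aux.B R a₁ a₂) :=
    (Stmt16Aux.equivB R a₁ a₂).symm.toEquiv.nontrivial
  set b := Stmt16Aux.basisT R a₁ a₂ with hb
  haveI hfree : Module.Free R (radQuadQuot R a₁ a₂) := Module.Free.of_basis b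
  haveI hfin : Module.Finite R (radQuadQuot R a₁ a₂) := Module.Finite.of_basis b
  haveI hint : Algebra.IsIntegral R (radQuadQuot R a₁ a₂) :=
    Algebra.IsIntegral.of_finite R _
  refine ⟨hfree, ?_, ?_⟩
  · rw [Module.finrank_eq_card_basis b, Fintype.card_prod, Fintype.card_fin, Fintype.card_fin,
      Stmt16Aux.dimA, Stmt16Aux.dimB]
  · intro S _ _ hinj φ hsurj
    have hker : RingHom.ker φ.toRingHom = ⊥ := by
      apply Ideal.eq_bot_of_comap_eq_bot (R := R)
      rw [eq_bot_iff]
      intro r hr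
      rw [Ideal.mem_comap, RingHom.mem_ker] at hr
      have : algebraMap R S r = 0 := by
        rw [← φ.commutes r]; exact hr
      have : r = 0 := hinj (by rw [this, map_zero])
      simpa using this
    have hinjφ : Function.Injective φ :=
      (RingHom.injective_iff_ker_eq_bot φ.toRingHom).mpr hker
    refine ⟨⟨hinjφ, hsurj⟩, ?_⟩
    let ℓ : radQuadQuot R a₁ a₂ ≃ₗ[R] S :=
      LinearEquiv.ofBijective φ.toLinearMap ⟨hinjφ, hsurj⟩
    let bS := b.map ℓ
    set i0 : Fin (Stmt16Aux.pbA R a₁).dim × Fin (Stmt16Aux.pbB R a₁ a₂).dim :=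
      (⟨0, (Stmt16Aux.pbA R a₁).dim_pos⟩, ⟨0, (Stmt16Aux.pbB R a₁ a₂).dim_pos⟩) with hi0
    have h1 : bS i0 = 1 := by
      rw [Module.Basis.map_apply, hb, hi0, Stmt16Aux.basisT_zero]
      exact map_one φ
    refine ⟨bS.coord i0, ?_⟩
    rw [← h1, Module.Basis.coord_apply, Module.Basis.repr_self, Finsupp.single_eq_same]
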